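/- Let A be a filter space with accumulation point a and B = A \ {a}. For each b ∈ B let f_b : X_b → Y_b be a map between topological spaces with f_b(x_b) = y_b for chosen points x_b ∈ X_b, y_b ∈ Y_b, and let Σf_b : Σ_A(X_b, x_b) → Σ_A(Y_b, y_b) be the induced map defined by (Σf_b)(b, x) = (b, f_b(x)) for x ∈ X_b \ {x_b} and (Σf_b)(x) = x for x ∈ A. If every f_b is a topological embedding, then Σf_b is a topological embedding; if every f_b is a homeomorphism, then Σf_b is a homeomorphism. -/

import Mathlib

universe u

/-- A filter space: a topological space with precisely one accumulation (non-isolated) point,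
namely `a`. -/
def IsFilterSpace (X : Type u) [TopologicalSpace X] (a : X) : Prop :=
  ¬ IsOpen ({a} : Set X) ∧ ∀ x : X, x ≠ a → IsOpen ({x} : Set X)

/-- The underlying set `F = A ∪ ⋃_{b ∈ B} {b} × (X_b \ {x_b})` of the `A`-sum, where
`B = A \ {a}`. -/
def ASumPt (A : Type u) (a : A) (X : {b : A // b ≠ a} → Type u)
    (x : (b : {b : A // b ≠ a}) → X b) : Type u :=
  A ⊕ (Σ b : {b : A // b ≠ a}, {y : X b // y ≠ x b})

open scoped Classical in
/-- The defining map `φ : A ⊔ (⊔_{b ∈ B} X_b) → F` of the `A`-sum. -/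
noncomputable def asumDefiningMap (A : Type u) (a : A) (X : {b : A // b ≠ a} → Type u)
    (x : (b : {b : A // b ≠ a}) → X b) :
    (A ⊕ (Σ b : {b : A // b ≠ a}, X b)) → ASumPt A a X x :=
  fun z => match z with
  | Sum.inl p => Sum.inl p
  | Sum.inr ⟨b, y⟩ => if h : y = x b then Sum.inl b.1 else Sum.inr ⟨b, ⟨y, h⟩⟩

/-- The `A`-sum `Σ_A(X_b, x_b)`: the quotient topology on `F` with respect to the defining
map `φ`. -/
noncomputable instance asumTop (A : Type u) [TopologicalSpace A] (a : A)
    (X : {b : A // b ≠ a} → Type u) [(b : {b : A // b ≠ a}) → TopologicalSpace (X b)]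
    (x : (b : {b : A // b ≠ a}) → X b) : TopologicalSpace (ASumPt A a X x) :=
  TopologicalSpace.coinduced (asumDefiningMap A a X x) inferInstance

open scoped Classical in
/-- The induced map `Σ f_b` between `A`-sums, sending `(b, v)` to `(b, f_b v)` (which is the
point `b ∈ A` of the target when `f_b v = y b`) and fixing the points of `A`. -/
noncomputable def asumMap (A : Type u) (a : A) (X Y : {b : A // b ≠ a} → Type u)
    (x : (b : {b : A // b ≠ a}) → X b) (y : (b : {b : A // b ≠ a}) → Y b)
    (f : (b : {b : A // b ≠ a}) → X b → Y b) : ASumPt A a X x → ASumPt A a Y y :=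
  fun z => match z with
  | Sum.inl p => Sum.inl p
  | Sum.inr ⟨b, v⟩ =>
      if h : f b v.1 = y b then Sum.inl b.1 else Sum.inr ⟨b, ⟨f b v.1, h⟩⟩


set_option linter.unusedSectionVars false

section aux

variable (A : Type u) [TopologicalSpace A] (a : A)
  (X : {b : A // b ≠ a} → Type u) [(b : {b : A // b ≠ a}) → TopologicalSpace (X b)]
  (x : (b : {b : A // b ≠ a}) → X b)

/-- The canonical map from each summand into the `A`-sum. -/
noncomputable def asumPsi (b : {b : A // b ≠ a}) : X b → ASumPt A a X x :=
  fun v => asumDefiningMap A a X x (Sum.inr ⟨b, v⟩)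

open scoped Classical in
lemma asumPsi_def (b : {b : A // b ≠ a}) (v : X b) :
    asumPsi A a X x b v =
      if h : v = x b then Sum.inl b.1 else (Sum.inr ⟨b, ⟨v, h⟩⟩ : ASumPt A a X x) := rfl

lemma isOpen_asum_iff (U : Set (ASumPt A a X x)) :
    IsOpen U ↔ IsOpen ((Sum.inl : A → ASumPt A a X x) ⁻¹' U) ∧
      ∀ b, IsOpen (asumPsi A a X x b ⁻¹' U) := by
  rw [show IsOpen U ↔ IsOpen (asumDefiningMap A a X x ⁻¹' U) from isOpen_coinduced,
    isOpen_sum_iff, isOpen_sigma_iff]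
  exact Iff.rfl

variable (Y : {b : A // b ≠ a} → Type u) [(b : {b : A // b ≠ a}) → TopologicalSpace (Y b)]
  (y : (b : {b : A // b ≠ a}) → Y b) (f : (b : {b : A // b ≠ a}) → X b → Y b)

lemma asumMap_comm (hf : ∀ b, f b (x b) = y b) (z : A ⊕ (Σ b : {b : A // b ≠ a}, X b)) :
    asumMap A a X Y x y f (asumDefiningMap A a X x z) =
      asumDefiningMap A a Y y (Sum.map id (fun s => ⟨s.1, f s.1 s.2⟩) z) := by
  classical
  match z with
  | Sum.inl p => rfl
  | Sum.inr ⟨b, v⟩ =>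
    show asumMap A a X Y x y f
        (if h : v = x b then Sum.inl b.1 else Sum.inr ⟨b, ⟨v, h⟩⟩) =
      (if h : f b v = y b then Sum.inl b.1 else Sum.inr ⟨b, ⟨f b v, h⟩⟩)
    by_cases h : v = x b
    · subst h
      erw [dif_pos rfl, dif_pos (hf b)]
      rfl
    · erw [dif_neg h]
      rfl

lemma asumMap_continuous (hf : ∀ b, f b (x b) = y b) (hc : ∀ b, Continuous (f b)) :
    Continuous (asumMap A a X Y x y f) := by
  rw [show (asumTop A a X x : TopologicalSpace (ASumPt A a X x)) =
      TopologicalSpace.coinduced (asumDefiningMap A a X x) inferInstance from rfl] at *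
  rw [continuous_coinduced_dom]
  have : (asumMap A a X Y x y f ∘ asumDefiningMap A a X x) =
      asumDefiningMap A a Y y ∘ Sum.map id (fun s => ⟨s.1, f s.1 s.2⟩) := by
    funext z; exact asumMap_comm A a X x Y y f hf z
  rw [this]
  refine Continuous.comp ?_ ?_
  · exact continuous_coinduced_rng
  · exact Continuous.sumMap continuous_id (continuous_sigma fun b =>
      (continuous_sigmaMk.comp (hc b)).comp continuous_id)

lemma asumMap_inl (p : A) : asumMap A a X Y x y f (Sum.inl p) = Sum.inl p := rfl

open scoped Classical in
lemma asumMap_inr (b : {b : A // b ≠ a}) (v : {v : X b // v ≠ x b}) :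
    asumMap A a X Y x y f (Sum.inr ⟨b, v⟩) =
      if h : f b v.1 = y b then Sum.inl b.1
      else (Sum.inr ⟨b, ⟨f b v.1, h⟩⟩ : ASumPt A a Y y) := rfl

lemma asumMap_inr_psi (b : {b : A // b ≠ a}) (v : {v : X b // v ≠ x b}) :
    asumMap A a X Y x y f (Sum.inr ⟨b, v⟩) = asumPsi A a Y y b (f b v.1) := rfl

lemma asumPsi_ne (b : {b : A // b ≠ a}) (v : {v : X b // v ≠ x b}) :
    asumPsi A a X x b v.1 = Sum.inr ⟨b, v⟩ := by
  rw [asumPsi_def, dif_neg v.2]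

end aux

/-- if all `f_b` are topological embeddings then `Σ f_b` is a topological
embedding; if all `f_b` are homeomorphisms then `Σ f_b` is a homeomorphism. -/
theorem stmt7 (A : Type u) [TopologicalSpace A] (a : A) (hA : IsFilterSpace A a)
    (X Y : {b : A // b ≠ a} → Type u) [(b : {b : A // b ≠ a}) → TopologicalSpace (X b)]
    [(b : {b : A // b ≠ a}) → TopologicalSpace (Y b)]
    (x : (b : {b : A // b ≠ a}) → X b) (y : (b : {b : A // b ≠ a}) → Y b)
    (f : (b : {b : A // b ≠ a}) → X b → Y b) (hf : ∀ b, f b (x b) = y b) :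
    ((∀ b, Topology.IsEmbedding (f b)) → Topology.IsEmbedding (asumMap A a X Y x y f)) ∧
    ((∀ b, IsHomeomorph (f b)) → IsHomeomorph (asumMap A a X Y x y f)) := by
  classical
  -- injectivity from injective components
  have hinj : (∀ b, Function.Injective (f b)) → Function.Injective (asumMap A a X Y x y f) := by
    intro hi z1 z2 h
    have key : ∀ (b : {b : A // b ≠ a}) (v : {v : X b // v ≠ x b}), f b v.1 ≠ y b := by
      intro b v hv
      exact v.2 (hi b (hv.trans (hf b).symm))
    match z1, z2 with
    | Sum.inl p, Sum.inl q =>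
      rw [asumMap_inl, asumMap_inl] at h
      exact congrArg Sum.inl (Sum.inl.inj h)
    | Sum.inl p, Sum.inr ⟨b, v⟩ =>
      rw [asumMap_inl, asumMap_inr, dif_neg (key b v)] at h
      exact absurd h (by simp)
    | Sum.inr ⟨b, v⟩, Sum.inl q =>
      rw [asumMap_inl, asumMap_inr, dif_neg (key b v)] at h
      exact absurd h (by simp)
    | Sum.inr ⟨b, v⟩, Sum.inr ⟨c, w⟩ =>
      rw [asumMap_inr, asumMap_inr, dif_neg (key b v), dif_neg (key c w)] at h
      have h' := Sum.inr.inj h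
      injection h' with h1 h2
      subst h1
      have h3 : f b v.1 = f b w.1 := congrArg Subtype.val (eq_of_heq h2)
      exact congrArg _ (congrArg _ (Subtype.ext (hi b h3)))
  constructor
  · -- embedding case
    intro he
    have hi : ∀ b, Function.Injective (f b) := fun b => (he b).injective
    have hcont : Continuous (asumMap A a X Y x y f) :=
      asumMap_continuous A a X x Y y f hf fun b => (he b).continuous
    refine ⟨⟨TopologicalSpace.ext_iff.mpr fun U => ?_⟩, hinj hi⟩
    rw [isOpen_induced_iff]
    constructor
    · intro hU
      obtain ⟨hUA, hUb⟩ := (isOpen_asum_iff A a X x U).mp hU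
      choose T hTopen hTpre using fun b => ((he b).isInducing.isOpen_iff).mp (hUb b)
      -- hTpre : f b ⁻¹' T b = asumPsi A a X x b ⁻¹' U
      have hpt : ∀ b, y b ∈ T b ↔ (Sum.inl b.1 : ASumPt A a X x) ∈ U := by
        intro b
        have h1 : y b ∈ T b ↔ x b ∈ f b ⁻¹' T b := by rw [Set.mem_preimage, hf b]
        rw [h1, hTpre b, Set.mem_preimage, asumPsi_def, dif_pos rfl]
        exact Iff.rfl
      refine ⟨fun z => Sum.elim (fun p => (Sum.inl p : ASumPt A a X x) ∈ U)
        (fun s : Σ b : {b : A // b ≠ a}, {w : Y b // w ≠ y b} => s.2.1 ∈ T s.1) z, ?_, ?_⟩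
      · set V : Set (ASumPt A a Y y) := fun z => Sum.elim
          (fun p => (Sum.inl p : ASumPt A a X x) ∈ U)
          (fun s : Σ b : {b : A // b ≠ a}, {w : Y b // w ≠ y b} => s.2.1 ∈ T s.1) z with hV
        have hpsiV : ∀ b, asumPsi A a Y y b ⁻¹' V = T b := by
          intro b
          ext w
          by_cases h : w = y b
          · subst h
            have h2 : asumPsi A a Y y b (y b) = Sum.inl b.1 := by rw [asumPsi_def, dif_pos rfl]
            rw [Set.mem_preimage, h2]
            show (Sum.inl b.1 : ASumPt A a X x) ∈ U ↔ y b ∈ T b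
            exact (hpt b).symm
          · rw [Set.mem_preimage, asumPsi_def, dif_neg h]
            exact Iff.rfl
        refine (isOpen_asum_iff A a Y y V).mpr ⟨hUA, fun b => ?_⟩
        rw [hpsiV b]
        exact hTopen b
      · ext z
        match z with
        | Sum.inl p => exact Iff.rfl
        | Sum.inr ⟨b, v⟩ =>
          have h1 : (Sum.inr ⟨b, v⟩ : ASumPt A a X x) ∈ U ↔ f b v.1 ∈ T b := by
            rw [← asumPsi_ne A a X x b v]
            exact (Set.ext_iff.mp (hTpre b) v.1).symm
          erw [Set.mem_preimage, asumMap_inr_psi]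
          by_cases h : f b v.1 = y b
          · have : asumPsi A a Y y b (f b v.1) = Sum.inl b.1 := by
              rw [asumPsi_def, dif_pos h]
            rw [this]
            show (Sum.inl b.1 : ASumPt A a X x) ∈ U ↔ _
            rw [← hpt b, ← h, ← h1]
            exact Iff.rfl
          · rw [asumPsi_def, dif_neg h]
            show f b v.1 ∈ T b ↔ _
            exact h1.symm
    · rintro ⟨V, hV, rfl⟩
      exact hcont.isOpen_preimage V hV
  · -- homeomorphism case
    intro hh
    choose e he using fun b => isHomeomorph_iff_exists_homeomorph.mp (hh b)
    set g : (b : {b : A // b ≠ a}) → Y b → X b := fun b => (e b).symm with hgdef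
    have hgf : ∀ b (v : X b), g b (f b v) = v := by
      intro b v
      rw [← he b]
      exact (e b).symm_apply_apply v
    have hfg : ∀ b (w : Y b), f b (g b w) = w := by
      intro b w
      rw [← he b]
      exact (e b).apply_symm_apply w
    have hg : ∀ b, g b (y b) = x b := by
      intro b
      rw [← hf b, hgf b]
    refine isHomeomorph_iff_exists_inverse.mpr
      ⟨asumMap_continuous A a X x Y y f hf fun b => (hh b).continuous,
        asumMap A a Y X y x g, ?_, ?_,
        asumMap_continuous A a Y y X x g hg fun b => (e b).symm.continuous⟩
    · intro z
      match z with
      | Sum.inl p => rfl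
      | Sum.inr ⟨b, v⟩ =>
        have h1 : f b v.1 ≠ y b := by
          intro h
          exact v.2 (by rw [← hgf b v.1, h, hg b])
        rw [asumMap_inr, dif_neg h1, asumMap_inr, dif_neg (by rw [hgf b v.1]; exact v.2 :
          g b (f b v.1) ≠ x b)]
        exact congrArg _ (congrArg _ (Subtype.ext (hgf b v.1)))
    · intro z
      match z with
      | Sum.inl p => rfl
      | Sum.inr ⟨b, w⟩ =>
        have h1 : g b w.1 ≠ x b := by
          intro h
          exact w.2 (by rw [← hfg b w.1, h, hf b])
        rw [asumMap_inr, dif_neg h1, asumMap_inr, dif_neg (by rw [hfg b w.1]; exact w.2 :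
          f b (g b w.1) ≠ y b)]
        exact congrArg _ (congrArg _ (Subtype.ext (hfg b w.1)))
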